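/- arXiv:1704.00531 — 2 statements merged into one kernel-verified Lean document; each statement's English description precedes it below -/
import Mathlib

section
/- Let (X,d) be an unbounded metric space and p ∈ X. The following statements are equivalent: (i) there exists an unbounded pretangent space Ω_{∞,r̃}^X; (ii) there exists a scaling sequence r̃ = (r_n) such that the Kuratowski lower limit Liminf_{n→∞} (1/r_n)S_p(X) (taken in ℝ with the standard metric) is an unbounded subset of ℝ⁺; (iii) the set S_p(X) is not ω-strongly porous at infinity. -/
open Filter Topology

/-- A scaling sequence: a sequence of positive reals tending to infinity. -/
def ScalingSeq (r : ℕ → ℝ) : Prop :=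
  (∀ n, 0 < r n) ∧ Tendsto r atTop atTop

/-- `x ∈ X̃_{∞,r̃}`: the sequence `x` satisfies `d(x_n,p) → ∞` and the finite limit
`d̃_r̃(x̃) = lim d(x_n,p)/r_n` exists.  Here `d` is the distance function of the space. -/
def SeqAdm {Y : Type*} (d : Y → Y → ℝ) (p : Y) (r : ℕ → ℝ) (x : ℕ → Y) : Prop :=
  Tendsto (fun n => d (x n) p) atTop atTop ∧
  ∃ L : ℝ, Tendsto (fun n => d (x n) p / r n) atTop (𝓝 L)

/-- The equivalence `x̃ ≡ ỹ ⇔ lim d(x_n,y_n)/r_n = 0`. -/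
def SeqEquiv {Y : Type*} (d : Y → Y → ℝ) (r : ℕ → ℝ) (x y : ℕ → Y) : Prop :=
  Tendsto (fun n => d (x n) (y n) / r n) atTop (𝓝 0)

/-- Mutual stability: the limit `lim d(x_n,y_n)/r_n` exists (and is finite). -/
def MutStable {Y : Type*} (d : Y → Y → ℝ) (r : ℕ → ℝ) (x y : ℕ → Y) : Prop :=
  ∃ L : ℝ, Tendsto (fun n => d (x n) (y n) / r n) atTop (𝓝 L)

/-- A set of sequences representing a clique in the graph `G_{X,r̃}`: all members are
admissible, the set is a union of equivalence classes, and all members are pairwise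
mutually stable. -/
def IsCliqueSet {Y : Type*} (d : Y → Y → ℝ) (p : Y) (r : ℕ → ℝ) (C : Set (ℕ → Y)) : Prop :=
  (∀ x ∈ C, SeqAdm d p r x) ∧
  (∀ x ∈ C, ∀ y, SeqAdm d p r y → SeqEquiv d r x y → y ∈ C) ∧
  (∀ x ∈ C, ∀ y ∈ C, MutStable d r x y)

/-- A pretangent space `Ω^X_{∞,r̃}`, encoded as the (union of the) maximal clique of the
graph `G_{X,r̃}`. -/
def IsPretangent {Y : Type*} (d : Y → Y → ℝ) (p : Y) (r : ℕ → ℝ) (C : Set (ℕ → Y)) : Prop :=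
  IsCliqueSet d p r C ∧ ∀ D, IsCliqueSet d p r D → C ⊆ D → D = C

/-- The point `α₀ = α₀(X,r̃)`: the class of admissible sequences with `d̃_r̃(x̃) = 0`. -/
def alphaZero {Y : Type*} (d : Y → Y → ℝ) (p : Y) (r : ℕ → ℝ) : Set (ℕ → Y) :=
  {x | SeqAdm d p r x ∧ Tendsto (fun n => d (x n) p / r n) atTop (𝓝 0)}

/-- The metric `ρ` of a pretangent space: `ρ(α,β) = lim d(x_n,y_n)/r_n`. -/
noncomputable def seqDist {Y : Type*} (d : Y → Y → ℝ) (r : ℕ → ℝ) (x y : ℕ → Y) : ℝ :=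
  limUnder atTop (fun n => d (x n) (y n) / r n)

/-- A sequence of reals is eventually increasing if `τ_{n+1} ≥ τ_n` for all
sufficiently large `n`. -/
def EventuallyIncr (τ : ℕ → ℝ) : Prop :=
  ∃ N : ℕ, ∀ n ≥ N, τ n ≤ τ (n + 1)

/-- `τ̃ ∈ Ẽ^i_∞`: an eventually increasing sequence in `E` tending to infinity. -/
def MemEInfty (E : Set ℝ) (τ : ℕ → ℝ) : Prop :=
  (∀ n, τ n ∈ E) ∧ EventuallyIncr τ ∧ Tendsto τ atTop atTop

/-- `(a,b)` is a connected component of `Int(ℝ⁺ \ E)`. -/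
def IsGapComponent (E : Set ℝ) (a b : ℝ) : Prop :=
  a < b ∧ Set.Ioo a b ⊆ interior (Set.Ici (0:ℝ) \ E) ∧
  a ∉ interior (Set.Ici (0:ℝ) \ E) ∧ b ∉ interior (Set.Ici (0:ℝ) \ E)

/-- `((aₙ,bₙ)) ∈ Ĩ^i_E`: every `(aₙ,bₙ)` is a connected component of `Int(ℝ⁺ \ E)`,
`(aₙ)` is eventually increasing, `aₙ → ∞` and `(bₙ-aₙ)/bₙ → 1`. -/
def MemIEi (E : Set ℝ) (a b : ℕ → ℝ) : Prop :=
  (∀ n, IsGapComponent E (a n) (b n)) ∧ EventuallyIncr a ∧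
  Tendsto a atTop atTop ∧ Tendsto (fun n => (b n - a n) / b n) atTop (𝓝 1)

/-- `ã ≍ γ̃`: there are constants `c₁, c₂ > 0` with `c₁ aₙ < γₙ < c₂ aₙ` for all `n`. -/
def BiComparable (a γ : ℕ → ℝ) : Prop :=
  ∃ c₁ c₂ : ℝ, 0 < c₁ ∧ 0 < c₂ ∧ ∀ n, c₁ * a n < γ n ∧ γ n < c₂ * a n

/-- `E` is `τ̃`-strongly porous at infinity if there is `((aₙ,bₙ)) ∈ Ĩ^i_E` with
`τ̃ ≍ ã`. -/
def TauStronglyPorousAtInfty (E : Set ℝ) (τ : ℕ → ℝ) : Prop :=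
  ∃ a b : ℕ → ℝ, MemIEi E a b ∧ BiComparable τ a

/-- `E` is completely strongly porous at infinity if it is `τ̃`-strongly porous at
infinity for every `τ̃ ∈ Ẽ^i_∞`. -/
def CompletelyStronglyPorousAtInfty (E : Set ℝ) : Prop :=
  ∀ τ : ℕ → ℝ, MemEInfty E τ → TauStronglyPorousAtInfty E τ

/-- `E` is `ω`-strongly porous at infinity if every `τ̃ ∈ Ẽ^i_∞` has a subsequence
`τ̃'` for which `E` is `τ̃'`-strongly porous at infinity. -/
def OmegaStronglyPorousAtInfty (E : Set ℝ) : Prop :=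
  ∀ τ : ℕ → ℝ, MemEInfty E τ →
    ∃ φ : ℕ → ℕ, StrictMono φ ∧ TauStronglyPorousAtInfty E (τ ∘ φ)

/-- The Kuratowski lower limit of a sequence of subsets of `ℝ` (with the standard
metric): `Liminf Kₙ = {y : lim dist(y,Kₙ) = 0}`. -/
def kuratowskiLiminf (K : ℕ → Set ℝ) : Set ℝ :=
  {y : ℝ | Tendsto (fun n => Metric.infDist y (K n)) atTop (𝓝 0)}

namespace PretHelp
open Set


lemma ulim_exists (U : Ultrafilter ℕ) {lo hi : ℝ} (u : ℕ → ℝ) (h : ∀ n, u n ∈ Set.Icc lo hi) :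
    ∃ L ∈ Set.Icc lo hi, Tendsto u (U : Filter ℕ) (𝓝 L) := by
  have h2 : ↑(U.map u) ≤ 𝓟 (Set.Icc lo hi) := by
    simpa [Filter.le_principal_iff, Ultrafilter.mem_map] using (Filter.univ_mem' h : u ⁻¹' Set.Icc lo hi ∈ (U : Filter ℕ))
  obtain ⟨a, ha, hle⟩ := (isCompact_Icc (a := lo) (b := hi)).ultrafilter_le_nhds (U.map u) h2
  exact ⟨a, ha, hle⟩

/-- select a strictly monotone sequence with `ψ m ∈ S m` where each `S m` is cofinal -/
lemma exists_strictMono_sel (Q : ℕ → ℕ → Prop) (h : ∀ m N, ∃ n, N < n ∧ Q m n) :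
    ∃ ψ : ℕ → ℕ, StrictMono ψ ∧ ∀ m, Q m (ψ m) := by
  choose g hg1 hg2 using h
  refine ⟨fun m => Nat.rec (g 0 0) (fun m ih => g (m+1) ih) m, strictMono_nat_of_lt_succ fun n => hg1 _ _, fun m => ?_⟩
  cases m with
  | zero => exact hg2 0 0
  | succ m => exact hg2 (m+1) _

lemma exists_strictMono_chain (P : ℕ → ℕ → Prop) (h : ∀ N, ∃ n, N < n ∧ P N n) :
    ∃ σ : ℕ → ℕ, StrictMono σ ∧ ∀ m, P (σ m) (σ (m+1)) := by
  choose g hg1 hg2 using h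
  exact ⟨fun m => Nat.rec 0 (fun _ ih => g ih) m,
    strictMono_nat_of_lt_succ fun n => hg1 _, fun m => hg2 _⟩

lemma exists_mono_subseq {e : ℕ → ℝ} (he : Tendsto e atTop atTop) :
    ∃ σ : ℕ → ℕ, StrictMono σ ∧ Monotone (e ∘ σ) := by
  have h : ∀ N, ∃ n, N < n ∧ e N ≤ e n := by
    intro N
    obtain ⟨n, hn1, hn2⟩ := ((he.eventually_ge_atTop (e N)).and (eventually_gt_atTop N)).exists
    exact ⟨n, hn2, hn1⟩
  obtain ⟨σ, hσ, hP⟩ := exists_strictMono_chain (fun N n => e N ≤ e n) h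
  exact ⟨σ, hσ, monotone_nat_of_le_succ hP⟩

/-- mem of U-sets are cofinal -/
lemma ultra_cofinal {U : Ultrafilter ℕ} (hU : (U : Filter ℕ) ≤ atTop) {S : Set ℕ}
    (hS : S ∈ U) (N : ℕ) : ∃ n, N < n ∧ n ∈ S := by
  have h2 : {n | N < n} ∈ (U : Filter ℕ) := hU (eventually_gt_atTop N)
  obtain ⟨n, hn⟩ := (Filter.nonempty_of_mem (Filter.inter_mem h2 hS))
  exact ⟨n, hn.1, hn.2⟩



lemma liminf_mem {E : Set ℝ} {r : ℕ → ℝ} (hr : ∀ n, 0 < r n) {e : ℕ → ℝ}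
    (he : ∀ n, e n ∈ E) {t : ℝ} (h : Tendsto (fun n => e n / r n) atTop (𝓝 t)) :
    t ∈ kuratowskiLiminf (fun n => (fun s => (1 / r n) * s) '' E) := by
  have hb : ∀ n, Metric.infDist t ((fun s => (1 / r n) * s) '' E) ≤ dist (e n / r n) t := by
    intro n
    rw [dist_comm]
    have hm : (1 / r n * e n) ∈ (fun s => 1 / r n * s) '' E := ⟨e n, he n, rfl⟩
    have h2 := Metric.infDist_le_dist_of_mem (x := t) hm
    rwa [one_div_mul_eq_div] at h2
  exact squeeze_zero (fun n => Metric.infDist_nonneg) hb (tendsto_iff_dist_tendsto_zero.mp h)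

lemma liminf_select {E : Set ℝ} (hE : E.Nonempty) {r : ℕ → ℝ} (hr : ∀ n, 0 < r n) {t : ℝ}
    (ht : t ∈ kuratowskiLiminf (fun n => (fun s => (1 / r n) * s) '' E)) :
    ∃ e : ℕ → ℝ, (∀ n, e n ∈ E) ∧ Tendsto (fun n => e n / r n) atTop (𝓝 t) := by
  have key : ∀ n : ℕ, ∃ e ∈ E, dist t (e / r n)
      < Metric.infDist t ((fun s => (1 / r n) * s) '' E) + 1 / (n + 1) := by
    intro n
    have hne : ((fun s => (1 / r n) * s) '' E).Nonempty := hE.image _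
    have hlt : Metric.infDist t ((fun s => (1 / r n) * s) '' E)
        < Metric.infDist t ((fun s => (1 / r n) * s) '' E) + 1 / (n + 1) :=
      lt_add_of_pos_right _ (by positivity)
    obtain ⟨y, ⟨e, heE, hye⟩, hy⟩ := (Metric.infDist_lt_iff hne).mp hlt
    refine ⟨e, heE, ?_⟩
    rw [← one_div_mul_eq_div]
    simp only at hye
    rw [hye]
    exact hy
  choose e heE hed using key
  refine ⟨e, heE, tendsto_iff_dist_tendsto_zero.mpr ?_⟩
  have h0 : Tendsto (fun n : ℕ => Metric.infDist t ((fun s => (1 / r n) * s) '' E) + 1 / (n + 1))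
      atTop (𝓝 0) := by
    have := ht.add (tendsto_one_div_add_atTop_nhds_zero_nat)
    simpa using this
  exact squeeze_zero (fun n => dist_nonneg) (fun n => by rw [dist_comm]; exact (hed n).le) h0

lemma not_mem_interior_of_mem_closure {E : Set ℝ} {a : ℝ} (ha : a ∈ closure E) :
    a ∉ interior (Set.Ici (0:ℝ) \ E) := by
  intro h
  obtain ⟨x, hx1, hx2⟩ := _root_.mem_closure_iff.mp ha _ isOpen_interior h
  exact (interior_subset hx1).2 hx2

lemma gap_props (E : Set ℝ) (hEub : ∀ M : ℝ, ∃ e ∈ E, M < e) {u v w : ℝ}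
    (hw : w ∈ E) (hw0 : 0 < w) (hwu : w ≤ u) (huv : u < v)
    (hgap : ∀ e ∈ E, ¬ (u ≤ e ∧ e ≤ v)) :
    w ≤ sSup (E ∩ Icc 0 u) ∧ sSup (E ∩ Icc 0 u) ≤ u ∧ v ≤ sInf (E ∩ Ici v) ∧
    IsGapComponent E (sSup (E ∩ Icc 0 u)) (sInf (E ∩ Ici v)) := by
  set a := sSup (E ∩ Icc 0 u) with ha
  set b := sInf (E ∩ Ici v) with hb
  have hane : (E ∩ Icc 0 u).Nonempty := ⟨w, hw, ⟨hw0.le, hwu⟩⟩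
  have habd : BddAbove (E ∩ Icc 0 u) := ⟨u, fun e he => he.2.2⟩
  have hbne : (E ∩ Ici v).Nonempty := by
    obtain ⟨e, heE, hev⟩ := hEub v
    exact ⟨e, heE, hev.le⟩
  have hbbd : BddBelow (E ∩ Ici v) := ⟨v, fun e he => he.2⟩
  have hwa : w ≤ a := le_csSup habd ⟨hw, ⟨hw0.le, hwu⟩⟩
  have hau : a ≤ u := csSup_le hane (fun e he => he.2.2)
  have hvb : v ≤ b := le_csInf hbne (fun e he => he.2)
  have hnotE : ∀ x, a < x → x < b → x ∉ E := by
    intro x hax hxb hxE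
    rcases le_or_gt x u with hxu | hux
    · exact absurd (le_csSup habd ⟨hxE, ⟨(hw0.trans_le (hwa.trans hax.le)).le, hxu⟩⟩)
        (not_le.mpr hax)
    · rcases le_or_gt v x with hvx | hxv
      · exact absurd (csInf_le hbbd ⟨hxE, hvx⟩) (not_le.mpr hxb)
      · exact hgap x hxE ⟨hux.le, hxv.le⟩
  refine ⟨hwa, hau, hvb, lt_of_le_of_lt hau (lt_of_lt_of_le huv hvb), ?_, ?_, ?_⟩
  · refine interior_maximal ?_ isOpen_Ioo
    intro x hx
    exact ⟨(hw0.trans_le (hwa.trans hx.1.le)).le, hnotE x hx.1 hx.2⟩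
  · exact not_mem_interior_of_mem_closure
      (closure_mono (Set.inter_subset_left) (csSup_mem_closure hane habd))
  · exact not_mem_interior_of_mem_closure
      (closure_mono (Set.inter_subset_left) (csInf_mem_closure hbne hbbd))


lemma mono_from {τ : ℕ → ℝ} {N₀ : ℕ} (h : ∀ n ≥ N₀, τ n ≤ τ (n+1)) {m n : ℕ}
    (hm : N₀ ≤ m) (hmn : m ≤ n) : τ m ≤ τ n := by
  induction n, hmn using Nat.le_induction with
  | base => exact le_refl _
  | succ n hn ih => exact ih.trans (h n (hm.trans hn))

lemma claimA (E : Set ℝ) (hE : E.Nonempty) (hω : OmegaStronglyPorousAtInfty E)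
    {r : ℕ → ℝ} (hr : ScalingSeq r)
    (hL : ¬ BddAbove (kuratowskiLiminf (fun n => (fun s => (1 / r n) * s) '' E))) : False := by
  obtain ⟨t, htL, ht1⟩ := not_bddAbove_iff.mp hL 1
  have ht0 : (0:ℝ) < t := lt_trans one_pos ht1
  obtain ⟨e, heE, het⟩ := liminf_select hE hr.1 htL
  have heinf : Tendsto e atTop atTop := by
    have h2 := Tendsto.pos_mul_atTop ht0 het hr.2
    refine h2.congr (fun n => ?_)
    exact div_mul_cancel₀ _ (hr.1 n).ne'
  obtain ⟨σ, hσ, hmono⟩ := exists_mono_subseq heinf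
  have hτmem : MemEInfty E (e ∘ σ) :=
    ⟨fun n => heE _, ⟨0, fun n _ => hmono (Nat.le_succ n)⟩, heinf.comp hσ.tendsto_atTop⟩
  obtain ⟨φ, hφ, a, b, hIEi, c₁, c₂, hc₁, hc₂, hcomp⟩ := hω (e ∘ σ) hτmem
  obtain ⟨t', ht'L, ht'big⟩ := not_bddAbove_iff.mp hL (t * (2 * c₂) + t)
  have ht'0 : 0 < t' := by
    have hpos : 0 < t * (2 * c₂) + t := by positivity
    linarith
  obtain ⟨e', he'E, he't⟩ := liminf_select hE hr.1 ht'L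
  set g := fun m => σ (φ m) with hg
  have hgmono : StrictMono g := hσ.comp hφ
  have hcomp' : ∀ n, c₁ * e (g n) < a n ∧ a n < c₂ * e (g n) := hcomp
  have hratio : Tendsto (fun n => e' n / e n) atTop (𝓝 (t' / t)) := by
    have h1 := he't.div het (ne_of_gt ht0)
    refine h1.congr' ?_
    filter_upwards [heinf.eventually_gt_atTop 0] with n hn
    have hrn := (hr.1 n).ne'
    show e' n / r n / (e n / r n) = e' n / e n
    field_simp
  set q := t' / t with hqdef
  have hq0 : 0 < q := div_pos ht'0 ht0
  have hq2 : 2 * c₂ < q := by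
    rw [hqdef, lt_div_iff₀ ht0]
    nlinarith
  have hratio_g : Tendsto (fun m => e' (g m) / e (g m)) atTop (𝓝 q) :=
    hratio.comp hgmono.tendsto_atTop
  have hev1 : ∀ᶠ m in atTop, q / 2 < e' (g m) / e (g m) ∧ e' (g m) / e (g m) < 2 * q :=
    hratio_g.eventually (Ioo_mem_nhds (by linarith) (by linarith))
  have hev2 : ∀ᶠ m in atTop, 0 < e (g m) :=
    (heinf.comp hgmono.tendsto_atTop).eventually_gt_atTop 0
  have hapos : ∀ᶠ m in atTop, 0 < a m := by
    filter_upwards [hev2] with m hm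
    nlinarith [(hcomp' m).1, mul_pos hc₁ hm]
  have hb0 : ∀ᶠ m in atTop, 0 < b m := by
    filter_upwards [hapos] with m hm
    exact lt_trans hm (hIEi.1 m).1
  have hab : Tendsto (fun m => a m / b m) atTop (𝓝 0) := by
    have h10 : Tendsto (fun m => 1 - (b m - a m) / b m) atTop (𝓝 0) := by
      simpa using (tendsto_const_nhds : Tendsto (fun _ : ℕ => (1:ℝ)) atTop (𝓝 1)).sub hIEi.2.2.2
    refine h10.congr' ?_
    filter_upwards [hb0] with m hm
    field_simp
    ring
  have hev3 : ∀ᶠ m in atTop, a m / b m < 1 / (2 * q / c₁ + 1) :=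
    hab.eventually (gt_mem_nhds (by positivity))
  obtain ⟨m, ⟨hr1, hr2⟩, hem, ham, hpor, hbm⟩ :=
    (hev1.and (hev2.and (hapos.and (hev3.and hb0)))).exists
  have hcm1 : c₁ * e (g m) < a m := (hcomp' m).1
  have hcm2 : a m < c₂ * e (g m) := (hcomp' m).2
  -- lower bound : a m < e' (g m)
  have hlow : a m < e' (g m) := by
    have h1 : q / 2 * e (g m) < e' (g m) := (lt_div_iff₀ hem).mp hr1
    nlinarith [mul_lt_mul_of_pos_right (show c₂ < q / 2 by linarith) hem]
  -- upper bound : e' (g m) < b m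
  have hup : e' (g m) < b m := by
    have h1 : e' (g m) < 2 * q * e (g m) := by
      have := (div_lt_iff₀ hem).mp hr2
      linarith
    have h3 : (2 * q / c₁ + 1) * a m < b m := by
      rw [div_lt_div_iff₀ hbm (by positivity)] at hpor
      nlinarith
    have h4 : 2 * q * e (g m) < 2 * q / c₁ * a m := by
      rw [div_mul_eq_mul_div, lt_div_iff₀ hc₁]
      nlinarith [mul_lt_mul_of_pos_left hcm1 (show (0:ℝ) < 2 * q by linarith)]
    nlinarith
  have hmem := (hIEi.1 m).2.1 ⟨hlow, hup⟩
  exact ((interior_subset hmem).2) (he'E (g m))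

lemma claimB (E : Set ℝ) (hE0 : (0:ℝ) ∈ E) (hEub : ∀ M : ℝ, ∃ e ∈ E, M < e)
    (h : ¬ OmegaStronglyPorousAtInfty E) :
    ∃ r : ℕ → ℝ, ScalingSeq r ∧
      ¬ BddAbove (kuratowskiLiminf (fun n => (fun s => (1 / r n) * s) '' E)) := by
  unfold OmegaStronglyPorousAtInfty at h
  push_neg at h
  obtain ⟨τ, hτmem, hτ⟩ := h
  obtain ⟨hτE, ⟨N₀, hN₀⟩, hτinf⟩ := hτmem
  set ρ := fun n => max (τ n) 1 with hρdef
  have hρpos : ∀ n, 0 < ρ n := fun n => lt_of_lt_of_le one_pos (le_max_right _ _)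
  have hρinf : Tendsto ρ atTop atTop := tendsto_atTop_mono (fun n => le_max_left _ _) hτinf
  have hρτ : ∀ᶠ n in atTop, ρ n = τ n ∧ 1 ≤ τ n := by
    filter_upwards [hτinf.eventually_ge_atTop 1] with n hn
    exact ⟨max_eq_left hn, hn⟩
  set K := fun n => (fun s => (1 / ρ n) * s) '' E with hK
  obtain ⟨U, hU⟩ := Filter.exists_ultrafilter_le (atTop : Filter ℕ)
  have hexists : ∀ t : ℝ, ∃ L ∈ Icc (0:ℝ) |t|,
      Tendsto (fun n => Metric.infDist t (K n)) (U : Filter ℕ) (𝓝 L) := by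
    intro t
    apply ulim_exists
    intro n
    refine ⟨Metric.infDist_nonneg, ?_⟩
    have h0K : (0:ℝ) ∈ K n := ⟨0, hE0, mul_zero _⟩
    have h2 := Metric.infDist_le_dist_of_mem (x := t) h0K
    simpa [Real.dist_eq] using h2
  choose H hHmem hHtend using hexists
  have hHnn : ∀ t, 0 ≤ H t := fun t => (hHmem t).1
  have hH1 : H 1 = 0 := by
    have hev : (fun n => Metric.infDist (1:ℝ) (K n)) =ᶠ[(U : Filter ℕ)] fun _ => 0 := by
      apply hU
      filter_upwards [hρτ] with n hn
      have h1K : (1:ℝ) ∈ K n := by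
        refine ⟨τ n, hτE n, ?_⟩
        show 1 / ρ n * τ n = 1
        rw [hn.1, one_div, inv_mul_cancel₀ (by linarith [hn.2] : τ n ≠ 0)]
      exact Metric.infDist_zero_of_mem h1K
    exact tendsto_nhds_unique (hHtend 1) ((tendsto_congr' hev).mpr tendsto_const_nhds)
  by_cases hZ : BddAbove {t : ℝ | H t = 0}
  · -- Z bounded : contradiction with non-porosity of τ
    exfalso
    have h1Z : (1:ℝ) ∈ {t : ℝ | H t = 0} := hH1
    set c := sSup {t : ℝ | H t = 0} + 1 with hcdef
    have hc1 : (1:ℝ) ≤ sSup {t : ℝ | H t = 0} := le_csSup hZ h1Z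
    have hc2 : (2:ℝ) ≤ c := by rw [hcdef]; linarith
    have hcZ : ∀ t, H t = 0 → t < c := fun t htz =>
      lt_of_le_of_lt (le_csSup hZ htz) (by rw [hcdef]; linarith)
    have hA : ∀ k : ℕ,
        {n : ℕ | ∀ e ∈ E, ¬(c * ρ n ≤ e ∧ e ≤ (c + k + 2) * ρ n)} ∈ U := by
      intro k
      by_contra hAc
      rw [← Ultrafilter.compl_mem_iff_notMem] at hAc
      have hwit : ∀ n : ℕ,
          ∃ w : ℝ, n ∈ {n : ℕ | ∀ e ∈ E, ¬(c * ρ n ≤ e ∧ e ≤ (c + k + 2) * ρ n)}ᶜ →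
            (w * ρ n ∈ E ∧ c ≤ w ∧ w ≤ c + k + 2) := by
        intro n
        by_cases hn : n ∈ {n : ℕ | ∀ e ∈ E, ¬(c * ρ n ≤ e ∧ e ≤ (c + k + 2) * ρ n)}ᶜ
        · simp only [Set.mem_compl_iff, Set.mem_setOf_eq] at hn
          push_neg at hn
          obtain ⟨e, heE, he1, he2⟩ := hn
          refine ⟨e / ρ n, fun _ => ⟨?_, ?_, ?_⟩⟩
          · rwa [div_mul_cancel₀ _ (hρpos n).ne']
          · rw [le_div_iff₀ (hρpos n)]; linarith
          · rw [div_le_iff₀ (hρpos n)]; linarith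
        · exact ⟨c, fun hmem => absurd hmem hn⟩
      choose w hw using hwit
      have hw'mem : ∀ n, max c (min (w n) (c + (k:ℝ) + 2)) ∈ Icc c (c + (k:ℝ) + 2) :=
        fun n => ⟨le_max_left _ _, max_le (by linarith) (min_le_right _ _)⟩
      obtain ⟨s, hsmem, hstend⟩ := ulim_exists U _ hw'mem
      have hwev : ∀ᶠ n in (U : Filter ℕ), w n * ρ n ∈ E ∧ c ≤ w n ∧ w n ≤ c + k + 2 := by
        filter_upwards [hAc] with n hn
        exact hw n hn
      have hweq : (fun n => max c (min (w n) (c + (k:ℝ) + 2))) =ᶠ[(U : Filter ℕ)] w := by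
        filter_upwards [hwev] with n hn
        rw [min_eq_left hn.2.2, max_eq_right hn.2.1]
      have hstendw : Tendsto w (U : Filter ℕ) (𝓝 s) := by
        rw [← tendsto_congr' hweq]; exact hstend
      have hs0 : H s = 0 := by
        refine le_antisymm ?_ (hHnn s)
        have hbd : ∀ n, Metric.infDist s (K n) ≤
            Metric.infDist (w n) (K n) + dist s (w n) := fun n =>
          Metric.infDist_le_infDist_add_dist
        have hrhs : Tendsto (fun n => Metric.infDist (w n) (K n) + dist s (w n))
            (U : Filter ℕ) (𝓝 0) := by
          have h1 : Tendsto (fun n => Metric.infDist (w n) (K n)) (U : Filter ℕ) (𝓝 0) := by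
            refine ((tendsto_congr' ?_).mpr tendsto_const_nhds)
            filter_upwards [hwev] with n hn
            have : w n ∈ K n := by
              refine ⟨w n * ρ n, hn.1, ?_⟩
              have hρn := (hρpos n).ne'
              field_simp
            exact Metric.infDist_zero_of_mem this
          have h2 : Tendsto (fun n => dist s (w n)) (U : Filter ℕ) (𝓝 0) := by
            have := tendsto_iff_dist_tendsto_zero.mp hstendw
            simpa [dist_comm] using this
          simpa using h1.add h2
        exact le_of_tendsto_of_tendsto' (hHtend s) hrhs hbd
      exact absurd (hcZ s hs0) (not_lt.mpr hsmem.1)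
    -- choose subsequence
    have hQ : ∀ k N : ℕ, ∃ n, N < n ∧
        ((∀ e ∈ E, ¬(c * ρ n ≤ e ∧ e ≤ (c + k + 2) * ρ n)) ∧ N₀ ≤ n ∧ 1 ≤ τ n ∧ ρ n = τ n) := by
      intro k N
      have hset : ({n : ℕ | ∀ e ∈ E, ¬(c * ρ n ≤ e ∧ e ≤ (c + k + 2) * ρ n)} ∩
          {n : ℕ | N₀ ≤ n ∧ 1 ≤ τ n ∧ ρ n = τ n}) ∈ U := by
        refine Filter.inter_mem (hA k) (hU ?_)
        filter_upwards [hρτ, eventually_ge_atTop N₀] with n h1 h2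
        exact ⟨h2, h1.2, h1.1⟩
      obtain ⟨n, hn1, hn2, hn3⟩ := ultra_cofinal hU hset N
      exact ⟨n, hn1, hn2, hn3⟩
    obtain ⟨ψ, hψ, hψmem⟩ := exists_strictMono_sel _ hQ
    have hsE : ∀ k, τ (ψ k) ∈ E := fun k => hτE _
    have hs1 : ∀ k, 1 ≤ τ (ψ k) := fun k => (hψmem k).2.2.1
    have hspos : ∀ k, 0 < τ (ψ k) := fun k => lt_of_lt_of_le one_pos (hs1 k)
    have hsmono : ∀ k l, k ≤ l → τ (ψ k) ≤ τ (ψ l) := fun k l hkl =>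
      mono_from hN₀ (hψmem k).2.1 (hψ.monotone hkl)
    have hsinf : Tendsto (fun k => τ (ψ k)) atTop atTop := hτinf.comp hψ.tendsto_atTop
    have hgap : ∀ k, ∀ e ∈ E, ¬(c * τ (ψ k) ≤ e ∧ e ≤ (c + k + 2) * τ (ψ k)) := by
      intro k
      have h1 := (hψmem k).1
      rwa [(hψmem k).2.2.2] at h1
    set a := fun k : ℕ => sSup (E ∩ Icc 0 (c * τ (ψ k))) with hadef
    set b := fun k : ℕ => sInf (E ∩ Ici ((c + k + 2) * τ (ψ k))) with hbdef
    have hgp : ∀ k, τ (ψ k) ≤ a k ∧ a k ≤ c * τ (ψ k) ∧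
        (c + k + 2) * τ (ψ k) ≤ b k ∧ IsGapComponent E (a k) (b k) := by
      intro k
      exact gap_props E hEub (hsE k) (hspos k)
        (le_mul_of_one_le_left (hspos k).le (by linarith))
        (mul_lt_mul_of_pos_right (by have := Nat.cast_nonneg (α := ℝ) k; linarith) (hspos k)) (hgap k)
    have hapos : ∀ k, 0 < a k := fun k => lt_of_lt_of_le (hspos k) (hgp k).1
    have hbpos : ∀ k, 0 < b k := fun k =>
      lt_of_lt_of_le (mul_pos (by have := Nat.cast_nonneg (α := ℝ) k; linarith) (hspos k))
        (hgp k).2.2.1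
    refine hτ ψ hψ ⟨a, b, ⟨fun k => (hgp k).2.2.2, ⟨0, fun k _ => ?_⟩, ?_, ?_⟩,
      ⟨1/2, c + 1, by norm_num, by linarith, fun k => ⟨?_, ?_⟩⟩⟩
    · -- a monotone
      refine csSup_le_csSup ⟨c * τ (ψ (k+1)), fun e he => he.2.2⟩
        ⟨τ (ψ k), hsE k, ⟨(hspos k).le, le_mul_of_one_le_left (hspos k).le (by linarith)⟩⟩
        (Set.inter_subset_inter_right _ (Set.Icc_subset_Icc_right
          (mul_le_mul_of_nonneg_left (hsmono k (k+1) (Nat.le_succ k)) (by linarith))))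
    · -- a → ∞
      exact tendsto_atTop_mono (fun k => (hgp k).1) hsinf
    · -- (b-a)/b → 1
      have hfrac : ∀ k, a k / b k ≤ c / (c + k + 2) := by
        intro k
        rw [div_le_div_iff₀ (hbpos k) (by positivity)]
        nlinarith [(hgp k).2.1, (hgp k).2.2.1, (hspos k), hbpos k,
          mul_le_mul_of_nonneg_left (hgp k).2.2.1 (show (0:ℝ) ≤ c by linarith)]
      have hab0 : Tendsto (fun k => a k / b k) atTop (𝓝 0) := by
        refine squeeze_zero (fun k => div_nonneg (hapos k).le (hbpos k).le) hfrac ?_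
        refine Tendsto.div_atTop tendsto_const_nhds ?_
        have h1 : Tendsto (fun k : ℕ => (k:ℝ) + (c + 2)) atTop atTop :=
          tendsto_atTop_add_const_right atTop (c+2) tendsto_natCast_atTop_atTop
        refine h1.congr (fun k => by ring)
      have h11 : Tendsto (fun k => 1 - a k / b k) atTop (𝓝 1) := by
        simpa using ((tendsto_const_nhds : Tendsto (fun _ : ℕ => (1:ℝ)) atTop (𝓝 1)).sub hab0)
      refine h11.congr (fun k => ?_)
      have hb := (hbpos k).ne'
      field_simp
    · -- 1/2 * τψ < a
      show (1:ℝ)/2 * τ (ψ k) < a k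
      linarith [hspos k, (hgp k).1]
    · -- a < (c+1) * τψ
      show a k < (c + 1) * τ (ψ k)
      nlinarith [hspos k, (hgp k).2.1]
  · -- Z unbounded : construct the scaling sequence
    have hsel : ∀ k : ℕ, ∃ t, H t = 0 ∧ (k:ℝ) < t := by
      intro k
      obtain ⟨t, ht, htk⟩ := not_bddAbove_iff.mp hZ k
      exact ⟨t, ht, htk⟩
    choose t ht htk using hsel
    have hSU : ∀ m : ℕ,
        {n : ℕ | ∀ k ≤ m, Metric.infDist (t k) (K n) < 1/((m:ℝ)+1)} ∈ U := by
      intro m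
      have hev : ∀ᶠ n in (U : Filter ℕ), ∀ k ∈ Finset.range (m+1),
          Metric.infDist (t k) (K n) < 1/((m:ℝ)+1) := by
        rw [Finset.eventually_all]
        intro k _
        have h0 : Tendsto (fun n => Metric.infDist (t k) (K n)) (U : Filter ℕ) (𝓝 0) := by
          have := hHtend (t k)
          rwa [ht k] at this
        exact h0.eventually_lt_const (by positivity)
      refine Filter.mem_of_superset hev ?_
      intro n hn k hk
      exact hn k (Finset.mem_range.mpr (Nat.lt_succ_of_le hk))
    obtain ⟨ψ, hψ, hψmem⟩ := exists_strictMono_sel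
      (fun m n => ∀ k ≤ m, Metric.infDist (t k) (K n) < 1/((m:ℝ)+1))
      (fun m N => ultra_cofinal hU (hSU m) N)
    refine ⟨fun m => ρ (ψ m), ⟨fun m => hρpos _, hρinf.comp hψ.tendsto_atTop⟩, ?_⟩
    rw [not_bddAbove_iff]
    intro M
    obtain ⟨k, hk⟩ := exists_nat_gt M
    refine ⟨t k, ?_, lt_trans hk (htk k)⟩
    show Tendsto (fun m => Metric.infDist (t k) ((fun s => (1 / ρ (ψ m)) * s) '' E)) atTop (𝓝 0)
    refine squeeze_zero' (Eventually.of_forall fun m => Metric.infDist_nonneg) ?_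
      tendsto_one_div_add_atTop_nhds_zero_nat
    filter_upwards [eventually_ge_atTop k] with m hm
    exact (hψmem m k hm).le

end PretHelp

/-- **Theorem on existence of unbounded pretangent spaces.** Let `(X,d)`
be an unbounded metric space and `p ∈ X`.  The following are equivalent:
(i)   there exists an unbounded pretangent space `Ω^X_{∞,r̃}`;
(ii)  there exists a scaling sequence `r̃ = (rₙ)` such that the Kuratowski lower limit
      `Liminf_{n→∞} (1/rₙ)·S_p(X)` is an unbounded subset of `ℝ⁺`;
(iii) the set `S_p(X)` is not `ω`-strongly porous at infinity. -/
theorem exists_unbounded_pretangent_iff {X : Type*} [MetricSpace X]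
    (hX : ¬ Bornology.IsBounded (Set.univ : Set X)) (p : X) :
    -- (i) ↔ (ii)
    ((∃ r : ℕ → ℝ, ScalingSeq r ∧ ∃ C : Set (ℕ → X), IsPretangent dist p r C ∧
        ∀ M : ℝ, ∃ x ∈ C, ∃ y ∈ C, M < seqDist dist r x y) ↔
      (∃ r : ℕ → ℝ, ScalingSeq r ∧
        ¬ BddAbove (kuratowskiLiminf
          (fun n => (fun s => (1 / r n) * s) '' (Set.range fun x : X => dist x p))))) ∧
    -- (ii) ↔ (iii)
    ((∃ r : ℕ → ℝ, ScalingSeq r ∧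
        ¬ BddAbove (kuratowskiLiminf
          (fun n => (fun s => (1 / r n) * s) '' (Set.range fun x : X => dist x p)))) ↔
      ¬ OmegaStronglyPorousAtInfty (Set.range fun x : X => dist x p)) := by
  set E := (Set.range fun x : X => dist x p) with hE
  have hE0 : (0:ℝ) ∈ E := ⟨p, dist_self p⟩
  have hEub : ∀ M : ℝ, ∃ e ∈ E, M < e := by
    intro M
    by_contra hc
    push_neg at hc
    refine hX ((Metric.isBounded_iff_subset_closedBall p).mpr ⟨M, fun x _ => ?_⟩)
    rw [Metric.mem_closedBall]
    exact hc (dist x p) ⟨x, rfl⟩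
  constructor
  · -- (i) ↔ (ii)
    constructor
    · rintro ⟨r, hr, C, hpre, hunb⟩
      refine ⟨r, hr, not_bddAbove_iff.mpr fun M => ?_⟩
      obtain ⟨x, hx, y, hy, hM⟩ := hunb (2*M)
      have hclq := hpre.1
      obtain ⟨L, hL⟩ := hclq.2.2 x hx y hy
      have hsd : seqDist dist r x y = L := hL.limUnder_eq
      rw [hsd] at hM
      obtain ⟨_, Lx, hLx⟩ := hclq.1 x hx
      obtain ⟨_, Ly, hLy⟩ := hclq.1 y hy
      have hLle : L ≤ Lx + Ly := by
        refine le_of_tendsto_of_tendsto' hL (hLx.add hLy) (fun n => ?_)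
        rw [← add_div]
        refine div_le_div_of_nonneg_right ?_ (hr.1 n).le |>.trans_eq rfl
        have h3 := dist_triangle (x n) p (y n)
        rw [dist_comm p (y n)] at h3
        exact h3
      rcases le_total Lx Ly with hxy | hxy
      · exact ⟨Ly, PretHelp.liminf_mem (E := E) hr.1 (e := fun n => dist (y n) p) (fun n => ⟨y n, rfl⟩) hLy, by linarith⟩
      · exact ⟨Lx, PretHelp.liminf_mem (E := E) hr.1 (e := fun n => dist (x n) p) (fun n => ⟨x n, rfl⟩) hLx, by linarith⟩
    · rintro ⟨r, hr, hL⟩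
      obtain ⟨U, hU⟩ := Filter.exists_ultrafilter_le (atTop : Filter ℕ)
      have hsel : ∀ k : ℕ, ∃ s, s ∈ kuratowskiLiminf
          (fun n => (fun s => (1 / r n) * s) '' E) ∧ (k:ℝ) < s := by
        intro k
        obtain ⟨s, h1, h2⟩ := not_bddAbove_iff.mp hL k
        exact ⟨s, h1, h2⟩
      choose t htL htk using hsel
      have ht0 : ∀ k, 0 < t k := fun k =>
        lt_of_le_of_lt (Nat.cast_nonneg k) (htk k)
      have hxex : ∀ k : ℕ, ∃ x : ℕ → X,
          Tendsto (fun n => dist (x n) p / r n) atTop (𝓝 (t k)) := by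
        intro k
        obtain ⟨e, heE, het⟩ := PretHelp.liminf_select ⟨0, hE0⟩ hr.1 (htL k)
        choose x hxe using fun n => (heE n : ∃ z : X, dist z p = e n)
        exact ⟨x, het.congr fun n => by rw [show e n = dist (x n) p from (hxe n).symm]⟩
      choose x hx using hxex
      set u := fun (k l : ℕ) (n : ℕ) => dist (x k n) (x l n) / r n with hu
      have hubd : ∀ k l, ∃ L', Tendsto (u k l) (U : Filter ℕ) (𝓝 L') := by
        intro k l
        set B := t k + t l + 1 with hB
        have hBpos : 0 < B := by have := ht0 k; have := ht0 l; rw [hB]; linarith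
        obtain ⟨L', _, hL'⟩ := PretHelp.ulim_exists U (fun n => min (u k l n) B)
          (fun n => ⟨le_min (div_nonneg dist_nonneg (hr.1 n).le) hBpos.le, min_le_right _ _⟩)
        refine ⟨L', hL'.congr' ?_⟩
        apply hU
        have hub : ∀ n, u k l n ≤ dist (x k n) p / r n + dist (x l n) p / r n := by
          intro n
          rw [← add_div]
          refine div_le_div_of_nonneg_right ?_ (hr.1 n).le
          have h3 := dist_triangle (x k n) p (x l n)
          rw [dist_comm p (x l n)] at h3
          exact h3
        have hsum := (hx k).add (hx l)
        have hev := hsum.eventually_lt_const (show t k + t l < B by rw [hB]; linarith)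
        filter_upwards [hev] with n hn
        exact min_eq_left (le_of_lt (lt_of_le_of_lt (hub n) hn))
      choose Lf hLf using hubd
      have hSU : ∀ m : ℕ,
          {n : ℕ | ∀ k ≤ m, ∀ l ≤ m, dist (u k l n) (Lf k l) < 1/((m:ℝ)+1)} ∈ U := by
        intro m
        have hev : ∀ᶠ n in (U : Filter ℕ), ∀ k ∈ Finset.range (m+1), ∀ l ∈ Finset.range (m+1),
            dist (u k l n) (Lf k l) < 1/((m:ℝ)+1) := by
          rw [Finset.eventually_all]
          intro k _
          rw [Finset.eventually_all]
          intro l _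
          exact (tendsto_iff_dist_tendsto_zero.mp (hLf k l)).eventually_lt_const (by positivity)
        refine Filter.mem_of_superset hev ?_
        intro n hn k hk l hl
        exact hn k (Finset.mem_range.mpr (Nat.lt_succ_of_le hk))
          l (Finset.mem_range.mpr (Nat.lt_succ_of_le hl))
      obtain ⟨ψ, hψ, hψmem⟩ := PretHelp.exists_strictMono_sel _
        (fun m N => PretHelp.ultra_cofinal hU (hSU m) N)
      set r' := fun m => r (ψ m) with hr'def
      have hr' : ScalingSeq r' := ⟨fun m => hr.1 _, hr.2.comp hψ.tendsto_atTop⟩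
      have hconv : ∀ k l, Tendsto (fun m => u k l (ψ m)) atTop (𝓝 (Lf k l)) := by
        intro k l
        rw [tendsto_iff_dist_tendsto_zero]
        refine squeeze_zero' (Eventually.of_forall fun m => dist_nonneg) ?_
          tendsto_one_div_add_atTop_nhds_zero_nat
        filter_upwards [eventually_ge_atTop (max k l)] with m hm
        exact (hψmem m k (le_trans (le_max_left _ _) hm) l (le_trans (le_max_right _ _) hm)).le
      have hxadm : ∀ k, SeqAdm dist p r' (fun m => x k (ψ m)) := by
        intro k
        have hdiv : Tendsto (fun m => dist (x k (ψ m)) p / r' m) atTop (𝓝 (t k)) :=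
          (hx k).comp hψ.tendsto_atTop
        refine ⟨?_, t k, hdiv⟩
        have h5 := Tendsto.pos_mul_atTop (ht0 k) hdiv hr'.2
        exact h5.congr fun m => div_mul_cancel₀ _ (hr.1 (ψ m)).ne'
      set C₀ := {y : ℕ → X | SeqAdm dist p r' y ∧
        ∃ k, SeqEquiv dist r' (fun m => x k (ψ m)) y} with hC₀
      have hxkC₀ : ∀ k, (fun m => x k (ψ m)) ∈ C₀ := by
        intro k
        refine ⟨hxadm k, k, ?_⟩
        have h6 : (fun m => dist (x k (ψ m)) (x k (ψ m)) / r' m) = fun _ => 0 := by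
          funext m; simp
        rw [SeqEquiv, h6]
        exact tendsto_const_nhds
      have hstab : ∀ y ∈ C₀, ∀ z ∈ C₀, MutStable dist r' y z := by
        rintro y ⟨hyadm, k, hyk⟩ z ⟨hzadm, l, hzl⟩
        refine ⟨Lf k l, ?_⟩
        have hdiff : Tendsto (fun m => dist (y m) (z m) / r' m - u k l (ψ m)) atTop (𝓝 0) := by
          have hghm : Tendsto (fun m => dist (x k (ψ m)) (y m) / r' m
              + dist (x l (ψ m)) (z m) / r' m) atTop (𝓝 0) := by
            simpa using hyk.add hzl
          refine squeeze_zero_norm (fun m => ?_) hghm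
          have h4 := dist_dist_dist_le (y m) (z m) (x k (ψ m)) (x l (ψ m))
          rw [Real.dist_eq] at h4
          have hpos := hr.1 (ψ m)
          rw [Real.norm_eq_abs]
          have h7 : dist (y m) (z m) / r' m - u k l (ψ m)
              = (dist (y m) (z m) - dist (x k (ψ m)) (x l (ψ m))) / r' m := by
            rw [sub_div]
          rw [h7, abs_div, abs_of_pos hpos]
          rw [← add_div]
          refine div_le_div_of_nonneg_right ?_ hpos.le
          calc |dist (y m) (z m) - dist (x k (ψ m)) (x l (ψ m))|
              ≤ dist (y m) (x k (ψ m)) + dist (z m) (x l (ψ m)) := h4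
            _ = dist (x k (ψ m)) (y m) + dist (x l (ψ m)) (z m) := by
                rw [dist_comm (y m), dist_comm (z m)]
        have h8 := hdiff.add (hconv k l)
        simp only [zero_add] at h8
        exact h8.congr fun m => by ring
      have hclose : ∀ y ∈ C₀, ∀ z, SeqAdm dist p r' z → SeqEquiv dist r' y z → z ∈ C₀ := by
        rintro y ⟨hyadm, k, hyk⟩ z hzadm hyz
        refine ⟨hzadm, k, ?_⟩
        have hsum : Tendsto (fun m => dist (x k (ψ m)) (y m) / r' m
            + dist (y m) (z m) / r' m) atTop (𝓝 0) := by simpa using hyk.add hyz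
        refine squeeze_zero (fun m => div_nonneg dist_nonneg (hr.1 _).le) (fun m => ?_) hsum
        rw [← add_div]
        exact div_le_div_of_nonneg_right (dist_triangle _ _ _) (hr.1 (ψ m)).le
      have hC₀clq : IsCliqueSet dist p r' C₀ := ⟨fun y hy => hy.1, hclose, hstab⟩
      set Fam := {D : Set (ℕ → X) | IsCliqueSet dist p r' D ∧ C₀ ⊆ D} with hFam
      have hzorn : ∃ m, C₀ ⊆ m ∧ Maximal (· ∈ Fam) m := by
        refine zorn_subset_nonempty Fam ?_ C₀ ⟨hC₀clq, subset_rfl⟩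
        intro ch hchsub hchain hne
        refine ⟨⋃₀ ch, ⟨⟨?_, ?_, ?_⟩, ?_⟩, fun s hs => Set.subset_sUnion_of_mem hs⟩
        · rintro y ⟨D, hD, hyD⟩
          exact (hchsub hD).1.1 y hyD
        · rintro y ⟨D, hD, hyD⟩ z hzadm hyz
          exact ⟨D, hD, (hchsub hD).1.2.1 y hyD z hzadm hyz⟩
        · rintro y ⟨D, hD, hyD⟩ z ⟨D', hD', hzD'⟩
          rcases hchain.total hD hD' with hDD | hDD
          · exact (hchsub hD').1.2.2 y (hDD hyD) z hzD'
          · exact (hchsub hD).1.2.2 y hyD z (hDD hzD')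
        · obtain ⟨D, hD⟩ := hne
          exact (hchsub hD).2.trans (Set.subset_sUnion_of_mem hD)
      obtain ⟨C, hC₀C, hCmax⟩ := hzorn
      refine ⟨r', hr', C, ⟨hCmax.1.1, fun D hD hCD =>
        subset_antisymm (hCmax.2 ⟨hD, hC₀C.trans hCD⟩ hCD) hCD⟩, ?_⟩
      intro M
      obtain ⟨k, hk⟩ := exists_nat_gt (M + t 0)
      refine ⟨fun m => x 0 (ψ m), hC₀C (hxkC₀ 0), fun m => x k (ψ m), hC₀C (hxkC₀ k), ?_⟩
      have hsd : seqDist dist r' (fun m => x 0 (ψ m)) (fun m => x k (ψ m)) = Lf 0 k :=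
        (hconv 0 k).limUnder_eq
      rw [hsd]
      have hge : t k - t 0 ≤ Lf 0 k := by
        have hten : Tendsto (fun m => dist (x k (ψ m)) p / r' m - dist (x 0 (ψ m)) p / r' m)
            atTop (𝓝 (t k - t 0)) :=
          ((hx k).comp hψ.tendsto_atTop).sub ((hx 0).comp hψ.tendsto_atTop)
        refine le_of_tendsto_of_tendsto' hten (hconv 0 k) (fun m => ?_)
        rw [div_sub_div_same]
        refine div_le_div_of_nonneg_right ?_ (hr.1 (ψ m)).le
        have h9 := dist_triangle (x k (ψ m)) (x 0 (ψ m)) p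
        rw [dist_comm (x k (ψ m)) (x 0 (ψ m))] at h9
        linarith
      linarith [htk k]
  · -- (ii) ↔ (iii)
    constructor
    · rintro ⟨r, hr, hL⟩ hω
      exact PretHelp.claimA E ⟨0, hE0⟩ hω hr hL
    · exact PretHelp.claimB E hE0 hEub
end

section
/- Let (X,d) be an unbounded metric space and p ∈ X. If p(S_p(X), ∞) = 0, then there exists a sequence (r̃_m)_{m∈ℕ} of scaling sequences such that the iterated pretangent space Ω_{∞,(r̃_1,…,r̃_m)}^X is unbounded for every m ∈ ℕ. -/
open Filter Topology

/-- `l(∞,h,E)`: the length of the longest interval contained in `[0,h] \ E`. -/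
noncomputable def gapLen (E : Set ℝ) (h : ℝ) : ℝ :=
  sSup {d : ℝ | ∃ a b : ℝ, a ≤ b ∧ d = b - a ∧ Set.Ioo a b ⊆ Set.Icc 0 h \ E}

/-- The porosity of `E ⊆ ℝ⁺` at infinity: `p(E,∞) = limsup_{h→∞} l(∞,h,E)/h`. -/
noncomputable def porosityAtInfty (E : Set ℝ) : ℝ :=
  Filter.limsup (fun h => gapLen E h / h) atTop

/-- `E` is strongly porous at infinity if `p(E,∞) = 1`. -/
def StronglyPorousAtInfty (E : Set ℝ) : Prop :=
  porosityAtInfty E = 1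

lemma tendsto_of_abs_sub_le {f g e : ℕ → ℝ} {l : ℝ}
    (h : ∀ᶠ n in atTop, |f n - g n| ≤ e n) (he : Tendsto e atTop (𝓝 0))
    (hg : Tendsto g atTop (𝓝 l)) : Tendsto f atTop (𝓝 l) := by
  have h0 : Tendsto (fun n => f n - g n) atTop (𝓝 0) := squeeze_zero_norm' h he
  have := h0.add hg
  simpa using this

lemma inv_nat_succ_tendsto (c : ℝ) :
    Tendsto (fun n : ℕ => c / ((n : ℝ) + 1)) atTop (𝓝 0) := by
  have := (tendsto_const_div_atTop_nhds_zero_nat c).comp (tendsto_add_atTop_nat 1)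
  exact this.congr (fun n => by push_cast [Function.comp]; ring_nf)

/-- The invariant: distance is a pseudometric and the set of distances to the marked
point is relatively dense near infinity. -/
def GoodSp (s : Σ α : Type, (α → α → ℝ) × α) : Prop :=
  (∀ x, s.2.1 x x = 0) ∧ (∀ x y, s.2.1 x y = s.2.1 y x) ∧
  (∀ x y z, s.2.1 x z ≤ s.2.1 x y + s.2.1 y z) ∧
  (∀ δ : ℝ, 0 < δ → ∃ H : ℝ, ∀ v : ℝ, H ≤ v → ∃ y, |s.2.1 y s.2.2 - v| ≤ δ * v)

structure StepData (s : Σ α : Type, (α → α → ℝ) × α) where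
  r : ℕ → ℝ
  scal : ScalingSeq r
  C : Set (ℕ → s.1)
  pret : IsPretangent s.2.1 s.2.2 r C
  x₀ : ℕ → s.1
  hx₀ : x₀ ∈ C
  unb : ∀ M : ℝ, ∃ a ∈ C, ∃ b ∈ C, M < seqDist s.2.1 r a b
  good : GoodSp ⟨{x : ℕ → s.1 // x ∈ C}, (fun a b => seqDist s.2.1 r a.1 b.1, ⟨x₀, hx₀⟩)⟩

theorem step_exists (s : Σ α : Type, (α → α → ℝ) × α) (hs : GoodSp s) :
    Nonempty (StepData s) := by
  obtain ⟨α, d, q⟩ := s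
  obtain ⟨hrefl, hsymm, htri, hdens⟩ := hs
  dsimp only at hrefl hsymm htri hdens
  -- nonnegativity
  have hnn : ∀ x y : α, 0 ≤ d x y := by
    intro x y
    have h1 := htri x y x
    have h2 := hrefl x
    have h3 := hsymm x y
    nlinarith
  -- thresholds
  have hH : ∀ n : ℕ, ∃ H : ℝ, ∀ v, H ≤ v → ∃ y, |d y q - v| ≤ (1/((n:ℝ)+1)) * v := by
    intro n
    exact hdens _ (by positivity)
  choose Hf hHf using hH
  set r₀ : ℕ → ℝ := fun n => max ((n:ℝ)+1) (Hf n) with hr₀def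
  have hr₀n : ∀ n : ℕ, ((n:ℝ)+1) ≤ r₀ n := fun n => le_max_left _ _
  have hr₀pos : ∀ n, 0 < r₀ n := fun n => lt_of_lt_of_le (by positivity) (hr₀n n)
  have hr₀H : ∀ n, Hf n ≤ r₀ n := fun n => le_max_right _ _
  -- the points
  have hpt : ∀ k n : ℕ, ∃ y : α,
      |d y q - (((min k n : ℕ):ℝ)+1) * r₀ n| ≤ (1/((n:ℝ)+1)) * ((((min k n : ℕ):ℝ)+1) * r₀ n) := by
    intro k n
    apply hHf n
    calc Hf n ≤ r₀ n := hr₀H n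
    _ ≤ (((min k n : ℕ):ℝ)+1) * r₀ n := by
        nlinarith [hr₀pos n, (Nat.cast_nonneg (min k n) : (0:ℝ) ≤ _)]
  choose x hx using hpt
  -- bound on distance to base point
  have hdub : ∀ k n : ℕ, d (x k n) q ≤ 2 * ((k:ℝ)+1) * r₀ n := by
    intro k n
    have h1 := abs_le.1 (hx k n)
    have h2 : ((min k n : ℕ):ℝ) ≤ (k:ℝ) := by exact_mod_cast min_le_left k n
    have h3 : (0:ℝ) < (n:ℝ)+1 := by positivity
    have h4 : 1/((n:ℝ)+1) ≤ 1 := by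
      rw [div_le_one h3]; linarith [(Nat.cast_nonneg n : (0:ℝ) ≤ _)]
    have h5 := hr₀pos n
    have h6 : (0:ℝ) ≤ ((min k n : ℕ):ℝ) := Nat.cast_nonneg _
    have hm : (0:ℝ) ≤ (((min k n : ℕ):ℝ)+1) * r₀ n := by positivity
    have h7 : (1/((n:ℝ)+1)) * ((((min k n : ℕ):ℝ)+1) * r₀ n) ≤ (((min k n : ℕ):ℝ)+1) * r₀ n := by
      nlinarith
    have h8 := mul_le_mul_of_nonneg_right h2 h5.le
    nlinarith [h1.2]
  -- compactness and diagonal subsequence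
  set F : ℕ → (ℕ × ℕ → ℝ) := fun n kj => d (x kj.1 n) (x kj.2 n) / r₀ n with hFdef
  have hFK : ∀ n, F n ∈ Set.pi Set.univ
      (fun kj : ℕ × ℕ => Set.Icc (0:ℝ) (2*((kj.1:ℝ)+1) + 2*((kj.2:ℝ)+1))) := by
    intro n kj _
    constructor
    · exact div_nonneg (hnn _ _) (hr₀pos n).le
    · rw [div_le_iff₀ (hr₀pos n)]
      have h1 : d (x kj.1 n) (x kj.2 n) ≤ d (x kj.1 n) q + d (x kj.2 n) q := by
        have := htri (x kj.1 n) q (x kj.2 n)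
        have := hsymm q (x kj.2 n)
        linarith
      have h2 := hdub kj.1 n
      have h3 := hdub kj.2 n
      nlinarith [hr₀pos n]
  have hK : IsCompact (Set.pi Set.univ
      (fun kj : ℕ × ℕ => Set.Icc (0:ℝ) (2*((kj.1:ℝ)+1) + 2*((kj.2:ℝ)+1)))) :=
    isCompact_univ_pi fun kj => isCompact_Icc
  obtain ⟨L, -, φ, hφ, hconv⟩ := hK.isSeqCompact hFK
  have hφn : ∀ n, n ≤ φ n := fun n => hφ.le_apply
  set r : ℕ → ℝ := fun n => r₀ (φ n) with hrdef
  set XX : ℕ → ℕ → α := fun k n => x k (φ n) with hXXdef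
  have hrpos : ∀ n, 0 < r n := fun n => hr₀pos _
  have hscal : ScalingSeq r := by
    refine ⟨hrpos, tendsto_atTop_mono (fun n => ?_) tendsto_natCast_atTop_atTop⟩
    calc (n:ℝ) ≤ (φ n : ℝ) := by exact_mod_cast hφn n
    _ ≤ (φ n : ℝ) + 1 := by linarith
    _ ≤ r₀ (φ n) := hr₀n _
  -- limit of distances to base point
  have hx' : ∀ k n : ℕ, |d (XX k n) q - (((min k (φ n) : ℕ):ℝ)+1) * r n| ≤
      (1/((φ n:ℝ)+1)) * ((((min k (φ n) : ℕ):ℝ)+1) * r n) := fun k n => hx k (φ n)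
  have hA : ∀ k : ℕ, Tendsto (fun n => d (XX k n) q / r n) atTop (𝓝 ((k:ℝ)+1)) := by
    intro k
    apply tendsto_of_abs_sub_le (g := fun _ => (k:ℝ)+1)
      (e := fun n => ((k:ℝ)+1)/((n:ℝ)+1)) _ (inv_nat_succ_tendsto _) tendsto_const_nhds
    filter_upwards [eventually_ge_atTop k] with n hn
    have hkφ : min k (φ n) = k := min_eq_left (le_trans hn (hφn n))
    have h1 := hx' k n
    rw [hkφ] at h1
    have h3 : (0:ℝ) < (φ n : ℝ) + 1 := by positivity
    have h4 : |d (XX k n) q / r n - ((k:ℝ)+1)| ≤ ((k:ℝ)+1)/((φ n : ℝ)+1) := by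
      rw [show d (XX k n) q / r n - ((k:ℝ)+1) = (d (XX k n) q - ((k:ℝ)+1) * r n) / r n by
        rw [sub_div, mul_div_assoc, div_self (hrpos n).ne', mul_one]]
      rw [abs_div, abs_of_pos (hrpos n)]
      rw [div_le_div_iff₀ (hrpos n) h3]
      calc |d (XX k n) q - ((k:ℝ)+1) * r n| * ((φ n : ℝ)+1)
          ≤ (1/((φ n:ℝ)+1) * (((k:ℝ)+1) * r n)) * ((φ n : ℝ)+1) := by
            apply mul_le_mul_of_nonneg_right h1 h3.le
        _ = ((k:ℝ)+1) * r n := by field_simp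
    refine h4.trans ?_
    apply div_le_div_of_nonneg_left (by positivity) (by positivity)
    have : (n:ℝ) ≤ (φ n : ℝ) := by exact_mod_cast hφn n
    linarith
  -- limits of mutual distances
  have hB : ∀ k j : ℕ, Tendsto (fun n => d (XX k n) (XX j n) / r n) atTop (𝓝 (L (k,j))) := by
    intro k j
    exact (tendsto_pi_nhds.1 hconv) (k, j)
  have hLlb : ∀ k j : ℕ, (k:ℝ) - (j:ℝ) ≤ L (k,j) := by
    intro k j
    have hle : ∀ n, d (XX k n) q / r n - d (XX j n) q / r n ≤ d (XX k n) (XX j n) / r n := by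
      intro n
      rw [div_sub_div_same]
      apply div_le_div_of_nonneg_right _ (hrpos n).le
      have := htri (XX k n) (XX j n) q
      linarith
    have := le_of_tendsto_of_tendsto' ((hA k).sub (hA j)) (hB k j) hle
    linarith
  have hLub : ∀ k j : ℕ, L (k,j) ≤ (k:ℝ) + (j:ℝ) + 2 := by
    intro k j
    have hle : ∀ n, d (XX k n) (XX j n) / r n ≤ d (XX k n) q / r n + d (XX j n) q / r n := by
      intro n
      rw [← add_div]
      apply div_le_div_of_nonneg_right _ (hrpos n).le
      have h1 := htri (XX k n) q (XX j n)
      have h2 := hsymm q (XX j n)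
      linarith
    have := le_of_tendsto_of_tendsto' (hB k j) ((hA k).add (hA j)) hle
    linarith
  -- admissibility
  have hAdm : ∀ k : ℕ, SeqAdm d q r (XX k) := by
    intro k
    refine ⟨?_, ⟨(k:ℝ)+1, hA k⟩⟩
    have h1 : Tendsto (fun n => (d (XX k n) q / r n) * r n) atTop atTop :=
      Tendsto.pos_mul_atTop (by positivity) (hA k) hscal.2
    refine h1.congr fun n => ?_
    exact div_mul_cancel₀ _ (hrpos n).ne'
  -- the small clique
  set C₀ : Set (ℕ → α) := {y | SeqAdm d q r y ∧ ∃ k, SeqEquiv d r y (XX k)} with hC₀def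
  have hXXC : ∀ k, XX k ∈ C₀ := by
    intro k
    refine ⟨hAdm k, k, ?_⟩
    have : (fun n => d (XX k n) (XX k n) / r n) = fun _ => (0:ℝ) := by
      funext n; rw [hrefl]; simp
    show Tendsto (fun n => d (XX k n) (XX k n) / r n) atTop (𝓝 0)
    rw [this]
    exact tendsto_const_nhds
  have hcliq : IsCliqueSet d q r C₀ := by
    refine ⟨fun y hy => hy.1, ?_, ?_⟩
    · rintro y ⟨hyadm, k, hk⟩ z hzadm hyz
      refine ⟨hzadm, k, ?_⟩
      have hzy : Tendsto (fun n => d (z n) (y n) / r n) atTop (𝓝 0) := by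
        refine hyz.congr fun n => by rw [hsymm]
      have hsum := hzy.add hk
      rw [add_zero] at hsum
      have hle : ∀ n, d (z n) (XX k n) / r n ≤ d (z n) (y n) / r n + d (y n) (XX k n) / r n := by
        intro n
        rw [← add_div]
        exact div_le_div_of_nonneg_right (htri (z n) (y n) (XX k n)) (hrpos n).le
      exact squeeze_zero' (Eventually.of_forall fun n => div_nonneg (hnn _ _) (hrpos n).le)
        (Eventually.of_forall hle) hsum
    · rintro y ⟨hyadm, k, hk⟩ z ⟨hzadm, j, hj⟩
      refine ⟨L (k,j), ?_⟩
      have habs : ∀ n, |d (y n) (z n) / r n - d (XX k n) (XX j n) / r n| ≤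
          d (y n) (XX k n) / r n + d (z n) (XX j n) / r n := by
        intro n
        have habs0 : |d (y n) (z n) - d (XX k n) (XX j n)| ≤
            d (y n) (XX k n) + d (z n) (XX j n) := by
          rw [abs_sub_le_iff]
          constructor
          · have t1 := htri (y n) (XX k n) (z n)
            have t2 := htri (XX k n) (XX j n) (z n)
            have t3 := hsymm (XX j n) (z n)
            linarith
          · have t1 := htri (XX k n) (y n) (XX j n)
            have t2 := htri (y n) (z n) (XX j n)
            have t3 := hsymm (y n) (XX k n)
            have t4 := hsymm (z n) (XX j n)
            linarith
        rw [div_sub_div_same, abs_div, abs_of_pos (hrpos n), ← add_div]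
        exact div_le_div_of_nonneg_right habs0 (hrpos n).le
      have he : Tendsto (fun n => d (y n) (XX k n) / r n + d (z n) (XX j n) / r n)
          atTop (𝓝 0) := by
        have := hk.add hj
        rwa [add_zero] at this
      exact tendsto_of_abs_sub_le (Eventually.of_forall habs) he (hB k j)
  -- Zorn
  set S : Set (Set (ℕ → α)) := {E | IsCliqueSet d q r E ∧ C₀ ⊆ E} with hSdef
  have hzorn : ∀ c ⊆ S, IsChain (· ⊆ ·) c → c.Nonempty →
      ∃ ub ∈ S, ∀ s ∈ c, s ⊆ ub := by
    rintro c hcS hchain ⟨E₀, hE₀⟩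
    refine ⟨⋃₀ c, ⟨⟨?_, ?_, ?_⟩, (hcS hE₀).2.trans (Set.subset_sUnion_of_mem hE₀)⟩,
      fun s hs => Set.subset_sUnion_of_mem hs⟩
    · rintro y ⟨E, hEc, hyE⟩
      exact (hcS hEc).1.1 y hyE
    · rintro y ⟨E, hEc, hyE⟩ z hzadm hyz
      exact ⟨E, hEc, (hcS hEc).1.2.1 y hyE z hzadm hyz⟩
    · rintro y ⟨E₁, hE₁c, hyE₁⟩ z ⟨E₂, hE₂c, hzE₂⟩
      rcases hchain.total hE₁c hE₂c with h | h
      · exact (hcS hE₂c).1.2.2 y (h hyE₁) z hzE₂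
      · exact (hcS hE₁c).1.2.2 y hyE₁ z (h hzE₂)
  obtain ⟨Dm, hCDm, hDmax⟩ := zorn_subset_nonempty S hzorn C₀ ⟨hcliq, subset_rfl⟩
  have hDcliq : IsCliqueSet d q r Dm := hDmax.prop.1
  have hpret : IsPretangent d q r Dm := by
    refine ⟨hDcliq, fun E hE hsub => ?_⟩
    have hES : E ∈ S := ⟨hE, hCDm.trans hsub⟩
    exact Set.Subset.antisymm (hDmax.2 hES hsub) hsub
  have hXXD : ∀ k, XX k ∈ Dm := fun k => hCDm (hXXC k)
  -- seqDist values
  have hsd : ∀ k j : ℕ, seqDist d r (XX k) (XX j) = L (k,j) := fun k j => (hB k j).limUnder_eq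
  -- unboundedness
  have hunb : ∀ M : ℝ, ∃ a ∈ Dm, ∃ b ∈ Dm, M < seqDist d r a b := by
    intro M
    refine ⟨XX (⌊M⌋₊ + 1), hXXD _, XX 0, hXXD 0, ?_⟩
    rw [hsd]
    have h1 := hLlb (⌊M⌋₊ + 1) 0
    have h2 : M < ((⌊M⌋₊ : ℝ) + 1) := Nat.lt_floor_add_one M
    push_cast at h1 ⊢
    linarith
  -- the new space is good
  have hgood : GoodSp ⟨{y : ℕ → α // y ∈ Dm}, (fun a b => seqDist d r a.1 b.1, ⟨XX 0, hXXD 0⟩)⟩ := by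
    refine ⟨?_, ?_, ?_, ?_⟩
    · intro a
      show seqDist d r a.1 a.1 = 0
      have : (fun n => d (a.1 n) (a.1 n) / r n) = fun _ => (0:ℝ) := by
        funext n; rw [hrefl]; simp
      rw [seqDist, this]
      exact Tendsto.limUnder_eq tendsto_const_nhds
    · intro a b
      show seqDist d r a.1 b.1 = seqDist d r b.1 a.1
      unfold seqDist
      congr 1
      funext n
      rw [hsymm]
    · rintro ⟨a, ha⟩ ⟨b, hb⟩ ⟨c, hc⟩
      show seqDist d r a c ≤ seqDist d r a b + seqDist d r b c
      obtain ⟨ℓ1, h1⟩ := hDcliq.2.2 a ha c hc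
      obtain ⟨ℓ2, h2⟩ := hDcliq.2.2 a ha b hb
      obtain ⟨ℓ3, h3⟩ := hDcliq.2.2 b hb c hc
      rw [seqDist, h1.limUnder_eq, seqDist, h2.limUnder_eq, seqDist, h3.limUnder_eq]
      refine le_of_tendsto_of_tendsto' h1 (h2.add h3) fun n => ?_
      rw [← add_div]
      exact div_le_div_of_nonneg_right (htri (a n) (b n) (c n)) (hrpos n).le
    · intro δ hδ
      refine ⟨2/δ + 2, fun v hv => ?_⟩
      have hv0 : (0:ℝ) < v := lt_of_lt_of_le (by positivity) hv
      refine ⟨⟨XX ⌊v⌋₊, hXXD _⟩, ?_⟩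
      show |seqDist d r (XX ⌊v⌋₊) (XX 0) - v| ≤ δ * v
      rw [hsd]
      have h1 := hLlb ⌊v⌋₊ 0
      have h2 := hLub ⌊v⌋₊ 0
      have h3 : ((⌊v⌋₊ : ℝ)) ≤ v := Nat.floor_le hv0.le
      have h4 : v < (⌊v⌋₊ : ℝ) + 1 := Nat.lt_floor_add_one v
      have h5 : 2 ≤ δ * v := by
        rw [← div_le_iff₀' hδ]
        linarith
      rw [abs_le]
      constructor <;> push_cast at h1 h2 ⊢ <;> nlinarith
  exact ⟨⟨r, hscal, Dm, hpret, XX 0, hXXD 0, hunb, hgood⟩⟩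


lemma ioo_sub_icc {a b h : ℝ} (hab : a < b) (hsub : Set.Ioo a b ⊆ Set.Icc 0 h) :
    0 ≤ a ∧ b ≤ h := by
  constructor
  · by_contra hc
    push_neg at hc
    have hma : a < min b 0 := lt_min hab hc
    have hu : (a + min b 0)/2 ∈ Set.Ioo a b := by
      constructor
      · linarith
      · have := min_le_left b 0
        linarith
    have h0 := (hsub hu).1
    have := min_le_right b 0
    linarith
  · by_contra hc
    push_neg at hc
    have hmb : max a h < b := max_lt hab hc
    have hu : (max a h + b)/2 ∈ Set.Ioo a b := by
      constructor
      · have := le_max_left a h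
        linarith
      · linarith
    have hh := (hsub hu).2
    have := le_max_right a h
    linarith

lemma gapLen_set_bddAbove (E : Set ℝ) (h : ℝ) :
    BddAbove {d : ℝ | ∃ a b : ℝ, a ≤ b ∧ d = b - a ∧ Set.Ioo a b ⊆ Set.Icc 0 h \ E} := by
  refine ⟨max h 0, ?_⟩
  rintro t ⟨a, b, hab, rfl, hsub⟩
  rcases eq_or_lt_of_le hab with rfl | hab'
  · simp [le_max_right]
  · have h1 := ioo_sub_icc hab' (hsub.trans (Set.diff_subset))
    have h2 := le_max_left h 0
    linarith [h1.1, h1.2]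

lemma gapLen_set_mem_zero (E : Set ℝ) (h : ℝ) :
    (0:ℝ) ∈ {d : ℝ | ∃ a b : ℝ, a ≤ b ∧ d = b - a ∧ Set.Ioo a b ⊆ Set.Icc 0 h \ E} :=
  ⟨0, 0, le_refl _, by ring, by simp⟩

lemma good_base (X : Type) [MetricSpace X] (p : X)
    (hpor : porosityAtInfty (Set.range fun x : X => dist x p) = 0) :
    GoodSp ⟨X, (dist, p)⟩ := by
  refine ⟨fun x => dist_self x, fun x y => dist_comm x y, fun x y z => dist_triangle x y z, ?_⟩
  intro δ hδ
  dsimp only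
  set S := Set.range fun x : X => dist x p with hS
  set ε := min δ 1 with hε
  have hε0 : 0 < ε := lt_min hδ one_pos
  have hε1 : ε ≤ 1 := min_le_right _ _
  have hεδ : ε ≤ δ := min_le_left _ _
  -- gapLen is bounded by h for h ≥ 1
  have hub : ∀ h : ℝ, 1 ≤ h → gapLen S h ≤ h := by
    intro h hh
    apply csSup_le ⟨0, gapLen_set_mem_zero S h⟩
    rintro t ⟨a, b, hab, rfl, hsub⟩
    rcases eq_or_lt_of_le hab with rfl | hab'
    · linarith
    · have := ioo_sub_icc hab' (hsub.trans (Set.diff_subset))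
      linarith [this.1, this.2]
  -- eventually small relative gaps
  have hbd : IsBoundedUnder (· ≤ ·) atTop (fun h => gapLen S h / h) := by
    apply isBoundedUnder_of_eventually_le (a := 1)
    filter_upwards [eventually_ge_atTop (1:ℝ)] with h hh
    rw [div_le_one (by linarith)]
    exact hub h hh
  have hlim : ∀ᶠ h in atTop, gapLen S h / h < ε/2 := by
    apply eventually_lt_of_limsup_lt _ hbd
    have : limsup (fun h => gapLen S h / h) atTop = 0 := hpor
    rw [this]
    positivity
  obtain ⟨H₀, hH₀⟩ := eventually_atTop.1 hlim
  refine ⟨max H₀ 1, fun v hv => ?_⟩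
  have hv1 : (1:ℝ) ≤ v := le_trans (le_max_right _ _) hv
  have hvH : H₀ ≤ v := le_trans (le_max_left _ _) hv
  by_contra hc
  push_neg at hc
  set h := (1+ε)*v with hh
  have hhv : v ≤ h := by nlinarith
  have hgap : Set.Ioo ((1-ε)*v) ((1+ε)*v) ⊆ Set.Icc 0 h \ S := by
    rintro t ⟨ht1, ht2⟩
    constructor
    · constructor
      · nlinarith
      · rw [hh]; linarith
    · rintro ⟨y, hy⟩
      have habs : |dist y p - v| < ε * v := by
        rw [abs_lt]
        constructor <;> [nlinarith; nlinarith]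
      have := hc y
      nlinarith [abs_nonneg (dist y p - v)]
  have hle : 2*ε*v ≤ gapLen S h := by
    apply le_csSup (gapLen_set_bddAbove S h)
    exact ⟨(1-ε)*v, (1+ε)*v, by nlinarith, by ring, hgap⟩
  have hlt := hH₀ h (le_trans hvH hhv)
  rw [div_lt_iff₀ (by nlinarith)] at hlt
  nlinarith


noncomputable def sdStep (s : Σ α : Type, (α → α → ℝ) × α) (hs : GoodSp s) : StepData s :=
  (step_exists s hs).some

/-- Let `(X,d)` be an unbounded metric space and `p ∈ X`.  If the
porosity at infinity of `S_p(X) = {d(x,p) : x ∈ X}` is `0`, then there is a sequence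
`(r̃ₘ)` of scaling sequences such that every iterated pretangent space
`Ω^X_{∞,(r̃₁,…,r̃ₘ)}` is unbounded.  The iterated spaces are encoded as a chain
`Y : ℕ → Σ α, (α → α → ℝ) × α` of spaces-with-distance-and-marked-point: `Y 0` is
`(X, dist, p)`, and `Y (m+1)` is realized on a pretangent clique `C` of `Y m` w.r.t.
`r̃ₘ` (with the metric `ρ = seqDist` of the pretangent space and some marked point of
it), and every `Y (m+1)` is unbounded. -/
theorem iterated_unbounded_pretangent (X : Type) [MetricSpace X]
    (hX : ¬ Bornology.IsBounded (Set.univ : Set X)) (p : X)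
    (hpor : porosityAtInfty (Set.range fun x : X => dist x p) = 0) :
    ∃ (Y : ℕ → Σ α : Type, (α → α → ℝ) × α) (r : ℕ → ℕ → ℝ),
      Y 0 = ⟨X, (dist, p)⟩ ∧
      ∀ m : ℕ, ScalingSeq (r m) ∧
        ∃ (C : Set (ℕ → (Y m).1)) (_ : IsPretangent (Y m).2.1 (Y m).2.2 (r m) C)
          (x₀ : ℕ → (Y m).1) (hx₀ : x₀ ∈ C),
          Y (m + 1) = ⟨{x : ℕ → (Y m).1 // x ∈ C},
            (fun a b => seqDist (Y m).2.1 (r m) a.1 b.1, ⟨x₀, hx₀⟩)⟩ ∧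
          (∀ M : ℝ, ∃ a ∈ C, ∃ b ∈ C, M < seqDist (Y m).2.1 (r m) a b) := by
  have g0 : GoodSp ⟨X, (dist, p)⟩ := good_base X p hpor
  let ch : ℕ → {s : Σ α : Type, (α → α → ℝ) × α // GoodSp s} := fun m =>
    Nat.rec ⟨⟨X, (dist, p)⟩, g0⟩ (fun _ ih => ⟨_, (sdStep ih.1 ih.2).good⟩) m
  refine ⟨fun m => (ch m).1, fun m => (sdStep (ch m).1 (ch m).2).r, rfl, fun m => ?_⟩
  exact ⟨(sdStep (ch m).1 (ch m).2).scal, (sdStep (ch m).1 (ch m).2).C,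
    (sdStep (ch m).1 (ch m).2).pret, (sdStep (ch m).1 (ch m).2).x₀,
    (sdStep (ch m).1 (ch m).2).hx₀, rfl, (sdStep (ch m).1 (ch m).2).unb⟩
end
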